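/- Let p_1,…,p_m be independent random variables in [0,1] with P(p_j ≤ t) ≤ t for j in a subset G of null indices, and let f:[0,1]^m → [0,∞) be coordinate-wise nonincreasing. If T is Simes' combining function applied to the p-values with indices in G, then E[ 1{T(p_G) ≤ f(p)} / f(p) ] ≤ 1. -/

import Mathlib

open MeasureTheory ProbabilityTheory Finset
open scoped Classical

/-- Simes' combining function applied to the p-values with indices in `G`:
`T(p_G) = min_{1≤k≤n} (n/k)·p_{(k)}`, expressed equivalently as
`min_{i∈G} (n / r_i)·p_i` where `r_i = |{j ∈ G : p_j ≤ p_i}|` is the rank of `p_i`. -/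
noncomputable def simes {m : ℕ} (G : Finset (Fin m)) (hG : G.Nonempty)
    (v : Fin m → ℝ) : ℝ :=
  G.inf' hG fun i => (G.card : ℝ) / ((G.filter fun j => v j ≤ v i).card : ℝ) * v i


open MeasureTheory ProbabilityTheory Finset
open scoped Classical

namespace SimesAux

variable {k : ℕ}

/-- the countable grid -/
def Qset (S : Fin k → Set ℝ) : Set (Fin k → ℝ) := {q | ∀ i, q i ∈ S i}

lemma Qset_countable {S : Fin k → Set ℝ} (hSc : ∀ i, (S i).Countable) :
    (Qset S).Countable := by
  have : Qset S = Set.pi Set.univ S := by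
    ext q; simp [Qset, Set.mem_pi]
  rw [this]
  exact Set.countable_univ_pi hSc

/-- measurable antitone upper envelope -/
noncomputable def envUp (S : Fin k → Set ℝ) (f : (Fin k → ℝ) → ℝ) (v : Fin k → ℝ) : ℝ :=
  sInf (f '' {q | q ∈ Qset S ∧ q ≤ v})

/-- measurable antitone lower envelope -/
noncomputable def envLo (S : Fin k → Set ℝ) (f : (Fin k → ℝ) → ℝ) (v : Fin k → ℝ) : ℝ :=
  sSup (f '' {q | q ∈ Qset S ∧ v ≤ q})

section basic

variable {S : Fin k → Set ℝ} {f : (Fin k → ℝ) → ℝ} {B : ℝ}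

lemma exists_below (hSd : ∀ i, Dense (S i)) (v : Fin k → ℝ) :
    ∃ q, q ∈ Qset S ∧ q ≤ v := by
  have h : ∀ i, ∃ s ∈ S i, s ∈ Set.Ioo (v i - 1) (v i) := fun i =>
    (hSd i).exists_between (by linarith)
  choose q hq1 hq2 using h
  exact ⟨q, hq1, fun i => (hq2 i).2.le⟩

lemma exists_above (hSd : ∀ i, Dense (S i)) (v : Fin k → ℝ) :
    ∃ q, q ∈ Qset S ∧ v ≤ q := by
  have h : ∀ i, ∃ s ∈ S i, s ∈ Set.Ioo (v i) (v i + 1) := fun i =>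
    (hSd i).exists_between (by linarith)
  choose q hq1 hq2 using h
  exact ⟨q, hq1, fun i => (hq2 i).1.le⟩

lemma upSet_nonempty (hSd : ∀ i, Dense (S i)) (v : Fin k → ℝ) :
    (f '' {q | q ∈ Qset S ∧ q ≤ v}).Nonempty := by
  obtain ⟨q, h1, h2⟩ := exists_below hSd v
  exact ⟨f q, ⟨q, ⟨h1, h2⟩, rfl⟩⟩

lemma loSet_nonempty (hSd : ∀ i, Dense (S i)) (v : Fin k → ℝ) :
    (f '' {q | q ∈ Qset S ∧ v ≤ q}).Nonempty := by
  obtain ⟨q, h1, h2⟩ := exists_above hSd v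
  exact ⟨f q, ⟨q, ⟨h1, h2⟩, rfl⟩⟩

lemma upSet_bddBelow (h0 : ∀ v, 0 ≤ f v) (v : Fin k → ℝ) :
    BddBelow (f '' {q | q ∈ Qset S ∧ q ≤ v}) := by
  refine ⟨0, ?_⟩; rintro b ⟨q, _, rfl⟩; exact h0 q

lemma upSet_bddAbove (hB : ∀ v, f v ≤ B) (v : Fin k → ℝ) :
    BddAbove (f '' {q | q ∈ Qset S ∧ q ≤ v}) := by
  refine ⟨B, ?_⟩; rintro b ⟨q, _, rfl⟩; exact hB q

lemma loSet_bddAbove (hB : ∀ v, f v ≤ B) (v : Fin k → ℝ) :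
    BddAbove (f '' {q | q ∈ Qset S ∧ v ≤ q}) := by
  refine ⟨B, ?_⟩; rintro b ⟨q, _, rfl⟩; exact hB q

lemma le_envUp (hf : Antitone f) (hSd : ∀ i, Dense (S i)) (v : Fin k → ℝ) :
    f v ≤ envUp S f v := by
  refine le_csInf (upSet_nonempty hSd v) ?_
  rintro b ⟨q, hq, rfl⟩; exact hf hq.2

lemma envLo_le (hf : Antitone f) (hSd : ∀ i, Dense (S i)) (v : Fin k → ℝ) :
    envLo S f v ≤ f v := by
  refine csSup_le (loSet_nonempty hSd v) ?_
  rintro b ⟨q, hq, rfl⟩; exact hf hq.2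

lemma envUp_nonneg (h0 : ∀ v, 0 ≤ f v) (hSd : ∀ i, Dense (S i)) (v : Fin k → ℝ) :
    0 ≤ envUp S f v := by
  refine le_csInf (upSet_nonempty hSd v) ?_
  rintro b ⟨q, _, rfl⟩; exact h0 q

lemma envUp_anti (h0 : ∀ v, 0 ≤ f v) (hSd : ∀ i, Dense (S i)) :
    Antitone (envUp S f) := by
  intro v v' hvv'
  refine csInf_le_csInf (upSet_bddBelow h0 v') (upSet_nonempty hSd v) ?_
  rintro b ⟨q, hq, rfl⟩; exact ⟨q, ⟨hq.1, hq.2.trans hvv'⟩, rfl⟩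

lemma envLo_anti (hB : ∀ v, f v ≤ B) (hSd : ∀ i, Dense (S i)) :
    Antitone (envLo S f) := by
  intro v v' hvv'
  refine csSup_le_csSup (loSet_bddAbove hB v) (loSet_nonempty hSd v') ?_
  rintro b ⟨q, hq, rfl⟩; exact ⟨q, ⟨hq.1, hvv'.trans hq.2⟩, rfl⟩

lemma measurableSet_le_box (q : Fin k → ℝ) : MeasurableSet {v : Fin k → ℝ | q ≤ v} := by
  have : {v : Fin k → ℝ | q ≤ v} = Set.pi Set.univ (fun i => Set.Ici (q i)) := by
    ext v; simp [Pi.le_def, Set.mem_pi]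
  rw [this]
  exact MeasurableSet.univ_pi (fun i => measurableSet_Ici)

lemma measurableSet_ge_box (q : Fin k → ℝ) : MeasurableSet {v : Fin k → ℝ | v ≤ q} := by
  have : {v : Fin k → ℝ | v ≤ q} = Set.pi Set.univ (fun i => Set.Iic (q i)) := by
    ext v; simp [Pi.le_def, Set.mem_pi]
  rw [this]
  exact MeasurableSet.univ_pi (fun i => measurableSet_Iic)

lemma measurable_envUp (hSc : ∀ i, (S i).Countable) (hSd : ∀ i, Dense (S i))
    (h0 : ∀ v, 0 ≤ f v) : Measurable (envUp S f) := by
  apply measurable_of_Iio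
  intro c
  have heq : envUp S f ⁻¹' Set.Iio c = ⋃ q ∈ {q | q ∈ Qset S ∧ f q < c}, {v | q ≤ v} := by
    ext v
    simp only [Set.mem_preimage, Set.mem_Iio, Set.mem_iUnion, Set.mem_setOf_eq]
    constructor
    · intro h
      rw [envUp, csInf_lt_iff (upSet_bddBelow h0 v) (upSet_nonempty hSd v)] at h
      obtain ⟨b, ⟨q, hq, rfl⟩, hb⟩ := h
      exact ⟨q, ⟨hq.1, hb⟩, hq.2⟩
    · rintro ⟨q, ⟨hq1, hq2⟩, hq3⟩
      calc envUp S f v ≤ f q := csInf_le (upSet_bddBelow h0 v) ⟨q, ⟨hq1, hq3⟩, rfl⟩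
        _ < c := hq2
  rw [heq]
  exact MeasurableSet.biUnion
    (Set.Countable.mono (fun q hq => hq.1) (Qset_countable hSc))
    (fun q _ => measurableSet_le_box q)

lemma measurable_envLo (hSc : ∀ i, (S i).Countable) (hSd : ∀ i, Dense (S i))
    (hB : ∀ v, f v ≤ B) : Measurable (envLo S f) := by
  apply measurable_of_Ioi
  intro c
  have heq : envLo S f ⁻¹' Set.Ioi c = ⋃ q ∈ {q | q ∈ Qset S ∧ c < f q}, {v | v ≤ q} := by
    ext v
    simp only [Set.mem_preimage, Set.mem_Ioi, Set.mem_iUnion, Set.mem_setOf_eq]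
    constructor
    · intro h
      rw [envLo, lt_csSup_iff (loSet_bddAbove hB v) (loSet_nonempty hSd v)] at h
      obtain ⟨b, ⟨q, hq, rfl⟩, hb⟩ := h
      exact ⟨q, ⟨hq.1, hb⟩, hq.2⟩
    · rintro ⟨q, ⟨hq1, hq2⟩, hq3⟩
      calc c < f q := hq2
        _ ≤ envLo S f v := le_csSup (loSet_bddAbove hB v) ⟨q, ⟨hq1, hq3⟩, rfl⟩
  rw [heq]
  exact MeasurableSet.biUnion
    (Set.Countable.mono (fun q hq => hq.1) (Qset_countable hSc))
    (fun q _ => measurableSet_ge_box q)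

end basic

end SimesAux

namespace SimesAux

section sections
variable {k : ℕ}

lemma insertNth_mono (i : Fin (k + 1)) {x x' : ℝ} {y y' : Fin k → ℝ}
    (hx : x ≤ x') (hy : y ≤ y') :
    (i.insertNth x y : Fin (k + 1) → ℝ) ≤ (i.insertNth x' y' : Fin (k + 1) → ℝ) := by
  intro l
  refine Fin.succAboveCases i ?_ ?_ l
  · simpa using hx
  · intro j; simpa using hy j

lemma insertNth_mem_Qset {S : Fin (k + 1) → Set ℝ} {s : ℝ} (hs : s ∈ S 0)
    {q' : Fin k → ℝ} (hq' : q' ∈ Qset (fun i => S ((0 : Fin (k + 1)).succAbove i))) :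
    (0 : Fin (k + 1)).insertNth s q' ∈ Qset S := by
  intro l
  refine Fin.succAboveCases (0 : Fin (k + 1)) ?_ ?_ l
  · simpa using hs
  · intro j; simpa using hq' j

/-- global upper envelope at `insertNth 0 x y` is below the sectional upper envelope of the
section at any grid point `s ≤ x`. -/
lemma envUp_section_le {S : Fin (k + 1) → Set ℝ} {f : (Fin (k + 1) → ℝ) → ℝ}
    (hSd : ∀ i, Dense (S i)) (h0 : ∀ v, 0 ≤ f v)
    {s x : ℝ} (hs : s ∈ S 0) (hsx : s ≤ x) (y : Fin k → ℝ) :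
    envUp S f ((0 : Fin (k + 1)).insertNth x y) ≤
      envUp (fun i => S ((0 : Fin (k + 1)).succAbove i))
        (fun y' => f ((0 : Fin (k + 1)).insertNth s y')) y := by
  refine le_csInf (upSet_nonempty (fun i => hSd _) y) ?_
  rintro b ⟨q', hq', rfl⟩
  refine csInf_le (upSet_bddBelow h0 _) ?_
  exact ⟨(0 : Fin (k + 1)).insertNth s q', ⟨insertNth_mem_Qset hs hq'.1,
    insertNth_mono _ hsx hq'.2⟩, rfl⟩

lemma envLo_section_le {S : Fin (k + 1) → Set ℝ} {f : (Fin (k + 1) → ℝ) → ℝ} {B : ℝ}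
    (hSd : ∀ i, Dense (S i)) (hB : ∀ v, f v ≤ B)
    {s x : ℝ} (hs : s ∈ S 0) (hxs : x ≤ s) (y : Fin k → ℝ) :
    envLo (fun i => S ((0 : Fin (k + 1)).succAbove i))
        (fun y' => f ((0 : Fin (k + 1)).insertNth s y')) y ≤
      envLo S f ((0 : Fin (k + 1)).insertNth x y) := by
  refine csSup_le (loSet_nonempty (fun i => hSd _) y) ?_
  rintro b ⟨q', hq', rfl⟩
  refine le_csSup (loSet_bddAbove hB _) ?_
  exact ⟨(0 : Fin (k + 1)).insertNth s q', ⟨insertNth_mem_Qset hs hq'.1,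
    insertNth_mono _ hxs hq'.2⟩, rfl⟩

end sections

end SimesAux

namespace SimesAux

open ENNReal

theorem envPair (k : ℕ) :
    ∀ (π : Fin k → Measure ℝ), (∀ i, IsProbabilityMeasure (π i)) →
    ∀ (S : Fin k → Set ℝ), (∀ i, (S i).Countable) → (∀ i, Dense (S i)) →
    (∀ (i : Fin k) (x : ℝ), π i {x} ≠ 0 → x ∈ S i) →
    ∀ (B : ℝ) (f : (Fin k → ℝ) → ℝ), Antitone f → (∀ v, 0 ≤ f v) → (∀ v, f v ≤ B) →
    ∀ r r' : ℝ, r ≤ r' →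
    Measure.pi π {v | envLo S f v < r ∧ r' < envUp S f v} = 0 := by
  induction k with
  | zero =>
    intro π hπ S hSc hSd hA B f hf h0 hB r r' hrr
    have hempty : {v : Fin 0 → ℝ | envLo S f v < r ∧ r' < envUp S f v} = ∅ := by
      rw [Set.eq_empty_iff_forall_notMem]
      rintro v ⟨h1, h2⟩
      have himg1 : f '' {q | q ∈ Qset S ∧ q ≤ v} = {f v} := by
        apply Set.eq_singleton_iff_unique_mem.mpr
        refine ⟨⟨v, ⟨fun i => i.elim0, le_refl v⟩, rfl⟩, ?_⟩
        rintro b ⟨q, _, rfl⟩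
        rw [Subsingleton.elim q v]
      have himg2 : f '' {q | q ∈ Qset S ∧ v ≤ q} = {f v} := by
        apply Set.eq_singleton_iff_unique_mem.mpr
        refine ⟨⟨v, ⟨fun i => i.elim0, le_refl v⟩, rfl⟩, ?_⟩
        rintro b ⟨q, _, rfl⟩
        rw [Subsingleton.elim q v]
      rw [envLo, himg2, csSup_singleton] at h1
      rw [envUp, himg1, csInf_singleton] at h2
      linarith
    rw [hempty]; exact measure_empty
  | succ k IH =>
    intro π hπ S hSc hSd hA B f hf h0 hB r r' hrr
    haveI : ∀ i, IsProbabilityMeasure (π i) := hπ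
    set i0 : Fin (k + 1) := 0 with hi0
    set S' : Fin k → Set ℝ := fun i => S (i0.succAbove i) with hS'
    set π' : Fin k → Measure ℝ := fun i => π (i0.succAbove i) with hπ'
    haveI : ∀ i, IsProbabilityMeasure (π' i) := fun i => hπ _
    set e := MeasurableEquiv.piFinSuccAbove (fun _ : Fin (k + 1) => ℝ) i0 with he
    have mp := measurePreserving_piFinSuccAbove π i0
    have hmUp : Measurable (envUp S f) := measurable_envUp hSc hSd h0
    have hmLo : Measurable (envLo S f) := measurable_envLo hSc hSd hB
    set D := {v : Fin (k + 1) → ℝ | envLo S f v < r ∧ r' < envUp S f v} with hDdef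
    have hD : MeasurableSet D := by
      have : D = envLo S f ⁻¹' Set.Iio r ∩ envUp S f ⁻¹' Set.Ioi r' := rfl
      rw [this]
      exact (hmLo measurableSet_Iio).inter (hmUp measurableSet_Ioi)
    set E := ⇑e.symm ⁻¹' D with hE'
    have hE : MeasurableSet E := e.symm.measurable hD
    have hmeasD : Measure.pi π D = ((π i0).prod (Measure.pi π')) E :=
      ((mp.symm e).measure_preimage hD.nullMeasurableSet).symm
    rw [hmeasD, Measure.prod_apply hE]
    have hsec : ∀ (x : ℝ) (y : Fin k → ℝ), (x, y) ∈ E ↔ i0.insertNth x y ∈ D := by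
      intro x y
      have : e.symm (x, y) = i0.insertNth x y := rfl
      rw [hE', Set.mem_preimage, this]
    -- sections at grid points are null
    have key1 : ∀ x : ℝ, x ∈ S i0 → Measure.pi π' (Prod.mk x ⁻¹' E) = 0 := by
      intro x hx
      refine measure_mono_null (t := {y : Fin k → ℝ |
        envLo S' (fun y' => f (i0.insertNth x y')) y < r ∧
        r' < envUp S' (fun y' => f (i0.insertNth x y')) y}) ?_ ?_
      · intro y hy
        obtain ⟨h1, h2⟩ := (hsec x y).mp hy
        exact ⟨lt_of_le_of_lt (envLo_section_le hSd hB hx (le_refl x) y) h1,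
          lt_of_lt_of_le h2 (envUp_section_le hSd h0 hx (le_refl x) y)⟩
      · exact IH π' (fun i => hπ _) S' (fun i => hSc _) (fun i => hSd _)
          (fun i x' h => hA _ _ h) B _
          (fun y y' hyy => hf (insertNth_mono _ (le_refl x) hyy))
          (fun y => h0 _) (fun y => hB _) r r' hrr
    -- distinct sections are a.e. disjoint
    have key2 : ∀ x₁ x₂ : ℝ, x₁ < x₂ →
        Measure.pi π' ((Prod.mk x₁ ⁻¹' E) ∩ (Prod.mk x₂ ⁻¹' E)) = 0 := by
      intro x₁ x₂ hlt
      obtain ⟨s, hs, hs1, hs2⟩ := (hSd i0).exists_between hlt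
      refine measure_mono_null (t := {y : Fin k → ℝ |
        envLo S' (fun y' => f (i0.insertNth s y')) y < r ∧
        r' < envUp S' (fun y' => f (i0.insertNth s y')) y}) ?_ ?_
      · rintro y ⟨hy1, hy2⟩
        obtain ⟨h1a, _⟩ := (hsec x₁ y).mp hy1
        obtain ⟨_, h2b⟩ := (hsec x₂ y).mp hy2
        exact ⟨lt_of_le_of_lt (envLo_section_le hSd hB hs hs1.le y) h1a,
          lt_of_lt_of_le h2b (envUp_section_le hSd h0 hs hs2.le y)⟩
      · exact IH π' (fun i => hπ _) S' (fun i => hSc _) (fun i => hSd _)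
          (fun i x' h => hA _ _ h) B _
          (fun y y' hyy => hf (insertNth_mono _ (le_refl s) hyy))
          (fun y => h0 _) (fun y => hB _) r r' hrr
    -- countably many sections have positive measure
    have key3 : {x : ℝ | Measure.pi π' (Prod.mk x ⁻¹' E) ≠ 0}.Countable := by
      have hcnt := Measure.countable_meas_pos_of_disjoint_iUnion₀
        (μ := Measure.pi π') (As := fun x : ℝ => Prod.mk x ⁻¹' E)
        (fun x => ((measurable_prodMk_left hE)).nullMeasurableSet)
        ?_
      · refine hcnt.mono ?_
        intro x hx
        simpa [pos_iff_ne_zero] using hx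
      · intro x₁ x₂ hne
        rcases hne.lt_or_gt with h | h
        · exact key2 x₁ x₂ h
        · have h' := key2 x₂ x₁ h
          rw [Set.inter_comm] at h'
          exact h'
    -- a.e. section is null
    have key4 : ∀ᵐ x ∂(π i0), Measure.pi π' (Prod.mk x ⁻¹' E) = 0 := by
      rw [ae_iff]
      refine measure_mono_null (t := ⋃ x ∈ {x : ℝ | Measure.pi π' (Prod.mk x ⁻¹' E) ≠ 0}, {x}) ?_ ?_
      · intro x hx
        simp only [Set.mem_iUnion, Set.mem_singleton_iff]
        exact ⟨x, hx, rfl⟩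
      · rw [measure_biUnion_null_iff key3]
        intro x hx
        by_contra hne
        exact hx (key1 x (hA i0 x hne))
    calc (∫⁻ x, Measure.pi π' (Prod.mk x ⁻¹' E) ∂(π i0))
        = ∫⁻ _, 0 ∂(π i0) := lintegral_congr_ae key4
      _ = 0 := lintegral_zero

theorem env_ae (k : ℕ) (π : Fin k → Measure ℝ) (hπ : ∀ i, IsProbabilityMeasure (π i))
    (S : Fin k → Set ℝ) (hSc : ∀ i, (S i).Countable) (hSd : ∀ i, Dense (S i))
    (hA : ∀ (i : Fin k) (x : ℝ), π i {x} ≠ 0 → x ∈ S i)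
    (B : ℝ) (f : (Fin k → ℝ) → ℝ) (hf : Antitone f) (h0 : ∀ v, 0 ≤ f v) (hB : ∀ v, f v ≤ B) :
    Measure.pi π {v | envLo S f v < envUp S f v} = 0 := by
  refine measure_mono_null (t := ⋃ p : ℚ × ℚ,
    {v | envLo S f v < (p.1 : ℝ) ∧ ((p.1 : ℝ) ≤ (p.2 : ℝ)) ∧ ((p.2 : ℝ) < envUp S f v)}) ?_ ?_
  · intro v hv
    have hv' : envLo S f v < envUp S f v := hv
    obtain ⟨q1, hq1a, hq1b⟩ := exists_rat_btwn hv'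
    obtain ⟨q2, hq2a, hq2b⟩ := exists_rat_btwn hq1b
    simp only [Set.mem_iUnion]
    exact ⟨(q1, q2), hq1a, le_of_lt (by exact_mod_cast hq2a), hq2b⟩
  · refine measure_iUnion_null ?_
    intro p
    by_cases hp : (p.1 : ℝ) ≤ (p.2 : ℝ)
    · refine measure_mono_null (t := {v | envLo S f v < (p.1 : ℝ) ∧ (p.2 : ℝ) < envUp S f v}) ?_ ?_
      · rintro v ⟨h1, _, h3⟩; exact ⟨h1, h3⟩
      · exact envPair k π hπ S hSc hSd hA B f hf h0 hB _ _ hp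
    · refine measure_mono_null (t := (∅ : Set (Fin k → ℝ))) ?_ measure_empty
      rintro v ⟨_, h2, _⟩; exact hp h2

end SimesAux

namespace SimesAux

open ENNReal

lemma oneDim (ν : Measure ℝ) [IsProbabilityMeasure ν]
    (hsu : ∀ t ∈ Set.Icc (0:ℝ) 1, ν (Set.Iic t) ≤ ENNReal.ofReal t)
    (hgt1 : ν (Set.Ioi (1:ℝ)) = 0)
    (h : ℝ → ℝ) (hh : Antitone h) (h0 : ∀ x, 0 ≤ h x) :
    ∫⁻ x, ENNReal.ofReal (if x ≤ h x then (h x)⁻¹ else 0) ∂ν ≤ 1 := by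
  set A : Set ℝ := {t | t ∈ Set.Icc (0:ℝ) 1 ∧ t ≤ h t} with hA
  have hne : (0:ℝ) ∈ A := ⟨⟨le_refl 0, zero_le_one⟩, h0 0⟩
  have hbdd : BddAbove A := ⟨1, fun t ht => ht.1.2⟩
  set t0 := sSup A with ht0def
  have ht0 : t0 ∈ Set.Icc (0:ℝ) 1 :=
    ⟨le_csSup hbdd hne, csSup_le ⟨0, hne⟩ (fun t ht => ht.1.2)⟩
  set C : ℝ≥0∞ := (ENNReal.ofReal t0)⁻¹ with hC
  have hpt : ∀ x : ℝ, x ≤ 1 → ENNReal.ofReal (if x ≤ h x then (h x)⁻¹ else 0)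
      ≤ Set.indicator (Set.Iic t0) (fun _ => C) x := by
    intro x hx1
    by_cases hev : x ≤ h x
    · have hht : t0 ≤ h x := by
        refine csSup_le ⟨0, hne⟩ ?_
        intro t ht
        rcases le_total t x with htx | hxt
        · exact htx.trans hev
        · exact ht.2.trans (hh hxt)
      have hxt0 : x ≤ t0 := by
        rcases le_or_gt x 0 with hx0 | hx0
        · exact hx0.trans ht0.1
        · exact le_csSup hbdd ⟨⟨hx0.le, hx1⟩, hev⟩
      rw [Set.indicator_of_mem (Set.mem_Iic.mpr hxt0), if_pos hev]
      have step1 : ENNReal.ofReal (h x)⁻¹ ≤ (ENNReal.ofReal (h x))⁻¹ := by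
        rcases lt_or_eq_of_le (h0 x) with hpos | hzero
        · rw [ENNReal.ofReal_inv_of_pos hpos]
        · rw [← hzero]; simp
      refine step1.trans ?_
      exact ENNReal.inv_le_inv.mpr (ENNReal.ofReal_le_ofReal hht)
    · rw [if_neg hev]; simp
  have hae : ∀ᵐ x ∂ν, x ≤ 1 := by
    rw [ae_iff]
    have : {x : ℝ | ¬ x ≤ 1} = Set.Ioi 1 := by ext x; simp [not_le]
    rw [this]; exact hgt1
  calc ∫⁻ x, ENNReal.ofReal (if x ≤ h x then (h x)⁻¹ else 0) ∂ν
      ≤ ∫⁻ x, Set.indicator (Set.Iic t0) (fun _ => C) x ∂ν :=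
        lintegral_mono_ae (hae.mono hpt)
    _ = C * ν (Set.Iic t0) := by
        rw [lintegral_indicator measurableSet_Iic, setLIntegral_const]
    _ ≤ C * ENNReal.ofReal t0 := mul_le_mul_right (hsu t0 ht0) C
    _ ≤ 1 := by
        rcases eq_or_ne (ENNReal.ofReal t0) 0 with hz | hz
        · rw [hz, mul_zero]; exact zero_le_one
        · rw [hC, ENNReal.inv_mul_cancel hz ENNReal.ofReal_ne_top]

end SimesAux

namespace SimesAux

variable {m : ℕ}

noncomputable def Rfun (G : Finset (Fin m)) (t : ℝ) (v : Fin m → ℝ) : ℕ :=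
  ((Finset.range (G.card + 1)).filter
    (fun kk : ℕ => kk ≤ (G.filter fun j => v j ≤ (kk : ℝ) * t / (G.card : ℝ)).card)).max'
    ⟨0, by simp⟩

lemma Rfun_mem (G : Finset (Fin m)) (t : ℝ) (v : Fin m → ℝ) :
    Rfun G t v ∈ (Finset.range (G.card + 1)).filter
      (fun kk : ℕ => kk ≤ (G.filter fun j => v j ≤ (kk : ℝ) * t / (G.card : ℝ)).card) :=
  Finset.max'_mem _ _

lemma Rfun_le (G : Finset (Fin m)) (t : ℝ) (v : Fin m → ℝ) : Rfun G t v ≤ G.card := by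
  have h := Finset.mem_range.mp (Finset.mem_filter.mp (Rfun_mem G t v)).1
  omega

lemma Rfun_prop (G : Finset (Fin m)) (t : ℝ) (v : Fin m → ℝ) :
    Rfun G t v ≤ (G.filter fun j => v j ≤ (Rfun G t v : ℝ) * t / (G.card : ℝ)).card :=
  (Finset.mem_filter.mp (Rfun_mem G t v)).2

lemma le_Rfun (G : Finset (Fin m)) (t : ℝ) (v : Fin m → ℝ) {kk : ℕ} (hk1 : kk ≤ G.card)
    (hk2 : kk ≤ (G.filter fun j => v j ≤ (kk : ℝ) * t / (G.card : ℝ)).card) :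
    kk ≤ Rfun G t v := by
  apply Finset.le_max'
  rw [Finset.mem_filter, Finset.mem_range]
  exact ⟨Nat.lt_succ_of_le hk1, hk2⟩

lemma Rfun_eq_iff (G : Finset (Fin m)) (t : ℝ) (v : Fin m → ℝ) (kk : ℕ) :
    Rfun G t v = kk ↔
      ((kk ≤ G.card ∧ kk ≤ (G.filter fun j => v j ≤ (kk : ℝ) * t / (G.card : ℝ)).card) ∧
       ∀ l, l ≤ G.card → l ≤ (G.filter fun j => v j ≤ (l : ℝ) * t / (G.card : ℝ)).card →
         l ≤ kk) := by
  constructor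
  · rintro rfl
    refine ⟨⟨Rfun_le G t v, Rfun_prop G t v⟩, ?_⟩
    intro l hl1 hl2
    exact le_Rfun G t v hl1 hl2
  · rintro ⟨⟨h1, h2⟩, h3⟩
    refine le_antisymm ?_ (le_Rfun G t v h1 h2)
    have := Rfun_mem G t v
    rw [Finset.mem_filter, Finset.mem_range] at this
    exact h3 _ (by omega) this.2

lemma Rfun_mul_mono (G : Finset (Fin m)) (hn : 0 < G.card) {t t' : ℝ} {v v' : Fin m → ℝ}
    (hv : v ≤ v') (ht' : 0 ≤ t') (htt : t' ≤ t) :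
    (Rfun G t' v' : ℝ) * t' ≤ (Rfun G t v : ℝ) * t := by
  set k := Rfun G t' v' with hk
  have hkR : k ≤ Rfun G t v := by
    refine le_Rfun G t v (Rfun_le G t' v') ?_
    refine le_trans (Rfun_prop G t' v') (Finset.card_le_card ?_)
    intro j hj
    rw [Finset.mem_filter] at hj ⊢
    refine ⟨hj.1, le_trans (hv j) (le_trans hj.2 ?_)⟩
    have hn' : (0:ℝ) ≤ (G.card : ℝ) := by positivity
    gcongr
  calc (k : ℝ) * t' ≤ (k : ℝ) * t := mul_le_mul_of_nonneg_left htt (by positivity)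
    _ ≤ (Rfun G t v : ℝ) * t := by
        apply mul_le_mul_of_nonneg_right ?_ (ht'.trans htt)
        exact_mod_cast hkR

lemma one_le_Rfun (G : Finset (Fin m)) (hG : G.Nonempty) {t : ℝ} {v : Fin m → ℝ}
    (hsim : simes G hG v ≤ t) : 1 ≤ Rfun G t v := by
  obtain ⟨i, hiG, hieq⟩ := Finset.exists_mem_eq_inf' hG
    (fun i => (G.card : ℝ) / ((G.filter fun j => v j ≤ v i).card : ℝ) * v i)
  set r := (G.filter fun j => v j ≤ v i).card with hr
  have hr1 : 1 ≤ r := Finset.card_pos.mpr ⟨i, Finset.mem_filter.mpr ⟨hiG, le_refl _⟩⟩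
  have hn1 : 1 ≤ G.card := Finset.card_pos.mpr hG
  have hF : (G.card : ℝ) / (r : ℝ) * v i ≤ t := by
    simp only [simes] at hsim
    rw [hieq] at hsim; exact hsim
  have hr0 : (0:ℝ) < (r : ℝ) := by exact_mod_cast hr1
  have hn0 : (0:ℝ) < (G.card : ℝ) := by exact_mod_cast hn1
  have hvi : v i ≤ (r : ℝ) * t / (G.card : ℝ) := by
    rw [div_mul_eq_mul_div, div_le_iff₀ hr0] at hF
    rw [le_div_iff₀ hn0]
    nlinarith
  have hsub : (G.filter fun j => v j ≤ v i) ⊆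
      (G.filter fun j => v j ≤ (r : ℝ) * t / (G.card : ℝ)) := by
    intro j hj
    rw [Finset.mem_filter] at hj ⊢
    exact ⟨hj.1, hj.2.trans hvi⟩
  exact le_trans hr1 (le_Rfun G t v (Finset.card_filter_le G _) (Finset.card_le_card hsub))

/-- the key pointwise inequality -/
lemma pointwise_bound (G : Finset (Fin m)) (hG : G.Nonempty) (fp : (Fin m → ℝ) → ℝ)
    (hfp0 : ∀ v, 0 ≤ fp v) (v : Fin m → ℝ) :
    (if simes G hG v ≤ fp v then (fp v)⁻¹ else 0) ≤
      ∑ j ∈ G, (if v j ≤ (Rfun G (fp v) v : ℝ) * fp v / (G.card : ℝ)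
        then ((G.card : ℝ) * ((Rfun G (fp v) v : ℝ) * fp v / (G.card : ℝ)))⁻¹ else 0) := by
  have hterm : ∀ j ∈ G, (0:ℝ) ≤ (if v j ≤ (Rfun G (fp v) v : ℝ) * fp v / (G.card : ℝ)
      then ((G.card : ℝ) * ((Rfun G (fp v) v : ℝ) * fp v / (G.card : ℝ)))⁻¹ else 0) := by
    intro j _
    have h1 := hfp0 v
    split
    · apply inv_nonneg.mpr; positivity
    · exact le_refl 0
  by_cases hev : simes G hG v ≤ fp v
  · rcases eq_or_lt_of_le (hfp0 v) with hz | hpos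
    · have hz' : (fp v)⁻¹ = 0 := by rw [← hz, inv_zero]
      rw [if_pos hev, hz']
      exact Finset.sum_nonneg hterm
    · set t := fp v with htdef
      set R := Rfun G t v with hRdef
      set n := G.card with hndef
      have hR1 : 1 ≤ R := one_le_Rfun G hG hev
      have hn : 0 < n := Finset.card_pos.mpr hG
      have hR0 : (0:ℝ) < (R:ℝ) := by exact_mod_cast hR1
      have hn0 : (0:ℝ) < (n:ℝ) := by exact_mod_cast hn
      set g := (R : ℝ) * t / (n : ℝ) with hgdef
      have hsum : ∑ j ∈ G, (if v j ≤ g then ((n:ℝ) * g)⁻¹ else 0)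
          = ((G.filter fun j => v j ≤ g).card : ℝ) * ((n:ℝ) * g)⁻¹ := by
        rw [← Finset.sum_filter, Finset.sum_const, nsmul_eq_mul]
      rw [if_pos hev, hsum]
      have hcard : (R : ℝ) ≤ ((G.filter fun j => v j ≤ g).card : ℝ) := by
        exact_mod_cast Rfun_prop G t v
      have hkey : t⁻¹ = (R : ℝ) * ((n:ℝ) * g)⁻¹ := by
        rw [hgdef]
        field_simp
      rw [hkey]
      apply mul_le_mul_of_nonneg_right hcard
      apply inv_nonneg.mpr
      positivity
  · rw [if_neg hev]
    exact Finset.sum_nonneg hterm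

section meas

lemma measurable_filter_card (G : Finset (Fin m)) (c : (Fin m → ℝ) → ℝ) (hc : Measurable c) :
    Measurable (fun v : Fin m → ℝ => (G.filter fun j => v j ≤ c v).card) := by
  have heq : (fun v : Fin m → ℝ => (G.filter fun j => v j ≤ c v).card)
      = fun v => ∑ j ∈ G, (if v j ≤ c v then 1 else 0) := by
    funext v; rw [Finset.card_filter]
  rw [heq]
  apply Finset.measurable_sum
  intro j _
  exact Measurable.ite (measurableSet_le (measurable_pi_apply j) hc)
    measurable_const measurable_const

lemma measurable_inf' {α : Type*} [MeasurableSpace α] {ι : Type*} :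
    ∀ {s : Finset ι} (hs : s.Nonempty) (φ : ι → α → ℝ), (∀ i, Measurable (φ i)) →
      Measurable (fun a => s.inf' hs (fun i => φ i a)) := by
  intro s hs
  induction hs using Finset.Nonempty.cons_induction with
  | singleton a => intro φ hφ; simpa using hφ a
  | cons a s h hs IH =>
    intro φ hφ
    have heq : (fun x => (Finset.cons a s h).inf' (Finset.cons_nonempty h) (fun i => φ i x))
        = fun x => min (φ a x) (s.inf' hs (fun i => φ i x)) := by
      funext x
      rw [Finset.inf'_cons]
    rw [heq]
    exact (hφ a).min (IH φ hφ)

lemma measurable_simes (G : Finset (Fin m)) (hG : G.Nonempty) : Measurable (simes G hG) := by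
  apply measurable_inf'
  intro i
  apply Measurable.mul ?_ (measurable_pi_apply i)
  exact Measurable.div measurable_const
    (measurable_from_top.comp (measurable_filter_card G (fun v => v i) (measurable_pi_apply i)))

end meas

end SimesAux

namespace SimesAux

open ENNReal

lemma term_bound {m' : ℕ} (π : Fin (m' + 1) → Measure ℝ)
    [hprob : ∀ i, IsProbabilityMeasure (π i)] (j : Fin (m' + 1))
    (hsu : ∀ t ∈ Set.Icc (0:ℝ) 1, π j (Set.Iic t) ≤ ENNReal.ofReal t)
    (hgt1 : π j (Set.Ioi 1) = 0)
    (g : (Fin (m' + 1) → ℝ) → ℝ) (hganti : Antitone g) (hg0 : ∀ v, 0 ≤ g v)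
    (hgm : Measurable g) (c : ℝ) (hc : 0 < c) :
    ∫⁻ v, ENNReal.ofReal (if v j ≤ g v then (c * g v)⁻¹ else 0) ∂(Measure.pi π)
      ≤ ENNReal.ofReal c⁻¹ := by
  set e := MeasurableEquiv.piFinSuccAbove (fun _ : Fin (m' + 1) => ℝ) j with he
  have mp := measurePreserving_piFinSuccAbove π j
  set F : (Fin (m' + 1) → ℝ) → ℝ≥0∞ :=
    fun v => ENNReal.ofReal (if v j ≤ g v then (c * g v)⁻¹ else 0) with hF
  have hFmeas : Measurable F := by
    apply ENNReal.measurable_ofReal.comp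
    exact Measurable.ite (measurableSet_le (measurable_pi_apply j) hgm)
      ((measurable_const.mul hgm).inv) measurable_const
  have hcomp : Measurable (fun z : ℝ × (Fin m' → ℝ) => F (e.symm z)) :=
    hFmeas.comp e.symm.measurable
  have h1 : ∫⁻ v, F v ∂(Measure.pi π)
      = ∫⁻ z, F (e.symm z) ∂((π j).prod (Measure.pi fun i => π (j.succAbove i))) := by
    have h2 := mp.lintegral_comp (f := fun z => F (e.symm z)) hcomp
    rw [← h2]
    congr 1
    funext v
    exact congrArg F (e.symm_apply_apply v).symm
  rw [h1, lintegral_prod_symm _ hcomp.aemeasurable]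
  have hinner : ∀ y : Fin m' → ℝ, ∫⁻ x, F (e.symm (x, y)) ∂(π j) ≤ ENNReal.ofReal c⁻¹ := by
    intro y
    have hsymm : ∀ x : ℝ, e.symm (x, y) = j.insertNth x y := fun x => rfl
    set h : ℝ → ℝ := fun x => g (j.insertNth x y) with hh
    have hhanti : Antitone h := fun x x' hxx' => hganti (insertNth_mono j hxx' (le_refl y))
    have hh0 : ∀ x, 0 ≤ h x := fun x => hg0 _
    have hFx : ∀ x : ℝ, F (e.symm (x, y))
        = ENNReal.ofReal c⁻¹ * ENNReal.ofReal (if x ≤ h x then (h x)⁻¹ else 0) := by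
      intro x
      rw [hsymm x, hF]
      dsimp only
      rw [Fin.insertNth_apply_same, ← ENNReal.ofReal_mul (by positivity)]
      congr 1
      split
      · rw [mul_inv]
      · rw [mul_zero]
    calc ∫⁻ x, F (e.symm (x, y)) ∂(π j)
        = ENNReal.ofReal c⁻¹ * ∫⁻ x, ENNReal.ofReal (if x ≤ h x then (h x)⁻¹ else 0) ∂(π j) := by
          simp only [hFx]
          rw [lintegral_const_mul' _ _ ENNReal.ofReal_ne_top]
      _ ≤ ENNReal.ofReal c⁻¹ * 1 :=
          mul_le_mul_right (oneDim (π j) hsu hgt1 h hhanti hh0) _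
      _ = ENNReal.ofReal c⁻¹ := mul_one _
  calc ∫⁻ y, ∫⁻ x, F (e.symm (x, y)) ∂(π j) ∂(Measure.pi fun i => π (j.succAbove i))
      ≤ ∫⁻ _, ENNReal.ofReal c⁻¹ ∂(Measure.pi fun i => π (j.succAbove i)) :=
        lintegral_mono hinner
    _ = ENNReal.ofReal c⁻¹ := by rw [lintegral_const, measure_univ, mul_one]

end SimesAux

namespace SimesAux

lemma measurable_Rfun_comp {m : ℕ} (G : Finset (Fin m)) (fp : (Fin m → ℝ) → ℝ)
    (hfpm : Measurable fp) : Measurable (fun v => Rfun G (fp v) v) := by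
  have hmcard : ∀ (l : ℕ), MeasurableSet
      {v : Fin m → ℝ | l ≤ (G.filter fun j => v j ≤ (l : ℝ) * fp v / (G.card : ℝ)).card} := by
    intro l
    have hm := measurable_filter_card G (fun v => (l : ℝ) * fp v / (G.card : ℝ))
      ((measurable_const.mul hfpm).div measurable_const)
    exact hm (show MeasurableSet {x : ℕ | l ≤ x} from trivial)
  apply measurable_to_countable'
  intro kk
  have hchar : (fun v => Rfun G (fp v) v) ⁻¹' {kk} =
      (({v : Fin m → ℝ | kk ≤ G.card} ∩
        {v : Fin m → ℝ | kk ≤ (G.filter fun j => v j ≤ (kk : ℝ) * fp v / (G.card : ℝ)).card}) ∩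
       ⋂ l : ℕ,
         ({v : Fin m → ℝ | l ≤ (G.filter fun j => v j ≤ (l : ℝ) * fp v / (G.card : ℝ)).card}ᶜ ∪
          {v : Fin m → ℝ | l ≤ kk})) := by
    ext v
    simp only [Set.mem_preimage, Set.mem_singleton_iff, Set.mem_inter_iff, Set.mem_setOf_eq,
      Set.mem_iInter, Set.mem_union, Set.mem_compl_iff]
    rw [Rfun_eq_iff]
    constructor
    · rintro ⟨⟨h1, h2⟩, h3⟩
      refine ⟨⟨h1, h2⟩, ?_⟩
      intro l
      by_cases hcard : l ≤ (G.filter fun j => v j ≤ (l : ℝ) * fp v / (G.card : ℝ)).card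
      · exact Or.inr (h3 l (le_trans hcard (Finset.card_filter_le G _)) hcard)
      · exact Or.inl hcard
    · rintro ⟨⟨h1, h2⟩, h3⟩
      refine ⟨⟨h1, h2⟩, ?_⟩
      intro l _ hcard
      rcases h3 l with h | h
      · exact absurd hcard h
      · exact h
  rw [hchar]
  refine MeasurableSet.inter (MeasurableSet.inter ?_ (hmcard kk)) ?_
  · by_cases h : kk ≤ G.card
    · simp only [h]; simp
    · simp only [h]; simp
  · refine MeasurableSet.iInter (fun l => ?_)
    refine MeasurableSet.union (hmcard l).compl ?_
    by_cases h : l ≤ kk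
    · simp only [h]; simp
    · simp only [h]; simp

end SimesAux


open SimesAux in
set_option maxHeartbeats 1000000 in
/-- Lemma D1(i): for independent p-values that are superuniform on a null subset `G`,
and a coordinate-wise nonincreasing nonnegative `f`, Simes' combined p-value over `G`
satisfies `E[ 1{T(p_G) ≤ f(p)} / f(p) ] ≤ 1`. -/
theorem simes_super_lemma
    {Ω : Type*} [MeasurableSpace Ω] (μ : Measure Ω) [IsProbabilityMeasure μ]
    (m : ℕ) (p : Fin m → Ω → ℝ) (hmeas : ∀ i, Measurable (p i))
    (hrange : ∀ i ω, p i ω ∈ Set.Icc (0:ℝ) 1)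
    (hindep : iIndepFun p μ)
    (G : Finset (Fin m)) (hG : G.Nonempty)
    (hnull : ∀ j ∈ G, ∀ t ∈ Set.Icc (0:ℝ) 1, μ {ω | p j ω ≤ t} ≤ ENNReal.ofReal t)
    (f : (Fin m → ℝ) → ℝ) (hf_anti : Antitone f) (hf_nonneg : ∀ v, 0 ≤ f v) :
    ∫ ω, (if simes G hG (fun j => p j ω) ≤ f (fun j => p j ω)
          then (f (fun j => p j ω))⁻¹ else 0) ∂μ ≤ 1 := by
  classical
  obtain ⟨m', rfl⟩ : ∃ m', m = m' + 1 := by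
    obtain ⟨j0, _⟩ := hG
    exact ⟨m - 1, by have := j0.pos; omega⟩
  have hn0 : 0 < G.card := Finset.card_pos.mpr hG
  set π : Fin (m' + 1) → Measure ℝ := fun i => μ.map (p i) with hπ
  have hπprob : ∀ i, IsProbabilityMeasure (π i) := fun i =>
    Measure.isProbabilityMeasure_map (hmeas i).aemeasurable
  haveI := hπprob
  have hPmeas : Measurable (fun ω (j : Fin (m' + 1)) => p j ω) :=
    measurable_pi_lambda _ (fun j => hmeas j)
  have hmap : Measure.pi π = μ.map (fun ω (j : Fin (m' + 1)) => p j ω) := by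
    apply Measure.pi_eq
    intro s hs
    rw [Measure.map_apply hPmeas (MeasurableSet.univ_pi hs)]
    have hpre : (fun ω (j : Fin (m' + 1)) => p j ω) ⁻¹' (Set.univ.pi s)
        = ⋂ i ∈ Finset.univ, p i ⁻¹' (s i) := by
      ext ω
      simp [Set.mem_pi]
    rw [hpre, hindep.measure_inter_preimage_eq_mul Finset.univ (fun i _ => hs i)]
    refine Finset.prod_congr rfl (fun i _ => ?_)
    exact (Measure.map_apply (hmeas i) (hs i)).symm
  have hsu : ∀ j ∈ G, ∀ t ∈ Set.Icc (0:ℝ) 1, π j (Set.Iic t) ≤ ENNReal.ofReal t := by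
    intro j hj t ht
    rw [hπ]; dsimp only
    rw [Measure.map_apply (hmeas j) measurableSet_Iic]
    exact hnull j hj t ht
  have hgt1 : ∀ j : Fin (m' + 1), π j (Set.Ioi (1:ℝ)) = 0 := by
    intro j
    rw [hπ]; dsimp only
    rw [Measure.map_apply (hmeas j) measurableSet_Ioi]
    have hempty : p j ⁻¹' Set.Ioi 1 = ∅ := by
      ext ω
      simp only [Set.mem_preimage, Set.mem_Ioi, Set.mem_empty_iff_false, iff_false, not_lt]
      exact (hrange j ω).2
    rw [hempty]; exact measure_empty
  -- the grid
  set SS : Fin (m' + 1) → Set ℝ := fun i => Set.range ((↑) : ℚ → ℝ) ∪ {x | π i {x} ≠ 0}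
    with hSS
  have hSc : ∀ i, (SS i).Countable := by
    intro i
    apply Set.Countable.union (Set.countable_range _)
    have hcnt := Measure.countable_meas_pos_of_disjoint_iUnion₀ (μ := π i)
      (As := fun x : ℝ => {x}) (fun x => (measurableSet_singleton x).nullMeasurableSet) ?_
    · refine hcnt.mono ?_
      intro x hx
      simpa [pos_iff_ne_zero] using hx
    · intro a b hab
      have hempty : ({a} ∩ {b} : Set ℝ) = ∅ := by
        ext x
        simp only [Set.mem_inter_iff, Set.mem_singleton_iff, Set.mem_empty_iff_false, iff_false,
          not_and]
        rintro rfl h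
        exact hab h
      show π i ({a} ∩ {b}) = 0
      rw [hempty]; exact measure_empty
  have hSd : ∀ i, Dense (SS i) := by
    intro i
    apply Dense.mono Set.subset_union_left
    exact Rat.denseRange_cast
  have hSa : ∀ (i : Fin (m' + 1)) (x : ℝ), π i {x} ≠ 0 → x ∈ SS i := fun i x h =>
    Set.mem_union_right _ h
  -- truncation and upper envelope
  set B := f (fun _ => (-1:ℝ)) with hB
  set fbar : (Fin (m' + 1) → ℝ) → ℝ := fun v => min (f v) B with hfbar
  have hfbar_anti : Antitone fbar := fun v v' h => min_le_min (hf_anti h) (le_refl B)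
  have hfbar0 : ∀ v, 0 ≤ fbar v := fun v => le_min (hf_nonneg v) (hf_nonneg _)
  have hfbarB : ∀ v, fbar v ≤ B := fun v => min_le_right _ _
  set fp : (Fin (m' + 1) → ℝ) → ℝ := envUp SS fbar with hfp
  have hfp_anti : Antitone fp := envUp_anti hfbar0 hSd
  have hfp0 : ∀ v, 0 ≤ fp v := envUp_nonneg hfbar0 hSd
  have hfpm : Measurable fp := measurable_envUp hSc hSd hfbar0
  -- the measurable substitute for the integrand
  set J : (Fin (m' + 1) → ℝ) → ℝ := fun v => if simes G hG v ≤ fp v then (fp v)⁻¹ else 0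
    with hJ
  have hJmeas : Measurable J :=
    Measurable.ite (measurableSet_le (measurable_simes G hG) hfpm) hfpm.inv measurable_const
  have hJ0 : ∀ v, 0 ≤ J v := by
    intro v
    rw [hJ]; dsimp only
    split
    · exact inv_nonneg.mpr (hfp0 v)
    · exact le_refl 0
  -- a.e. equality of f and fp along p
  have haeq : ∀ᵐ ω ∂μ, f (fun j => p j ω) = fp (fun j => p j ω) := by
    have hNset : MeasurableSet {v | envLo SS fbar v < fp v} :=
      measurableSet_lt (measurable_envLo hSc hSd hfbarB) hfpm
    have hnullN : μ ((fun ω (j : Fin (m' + 1)) => p j ω) ⁻¹'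
        {v | envLo SS fbar v < fp v}) = 0 := by
      rw [← Measure.map_apply hPmeas hNset, ← hmap]
      exact env_ae (m' + 1) π hπprob SS hSc hSd hSa B fbar hfbar_anti hfbar0 hfbarB
    rw [ae_iff]
    refine measure_mono_null ?_ hnullN
    intro ω hω
    simp only [Set.mem_setOf_eq] at hω ⊢
    set v : Fin (m' + 1) → ℝ := fun j => p j ω with hv
    have hvn : (fun _ : Fin (m' + 1) => (-1:ℝ)) ≤ v := by
      intro i
      have := (hrange i ω).1
      simp only [hv]
      linarith
    have hfb : fbar v = f v := min_eq_left (hf_anti hvn)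
    have h2 : fbar v ≤ fp v := le_envUp hfbar_anti hSd v
    have h3 : envLo SS fbar v ≤ fbar v := envLo_le hfbar_anti hSd v
    refine lt_of_le_of_lt h3 (lt_of_le_of_ne h2 ?_)
    intro hEq
    exact hω (by rw [← hfb, hEq])
  have hIJ : ∫ ω, (if simes G hG (fun j => p j ω) ≤ f (fun j => p j ω)
          then (f (fun j => p j ω))⁻¹ else 0) ∂μ = ∫ ω, J (fun j => p j ω) ∂μ := by
    apply integral_congr_ae
    refine haeq.mono (fun ω hω => ?_)
    rw [hJ]; dsimp only
    rw [← hω]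
  rw [hIJ]
  have hint2 : ∫ ω, J (fun j => p j ω) ∂μ = ∫ v, J v ∂(Measure.pi π) := by
    rw [hmap, integral_map hPmeas.aemeasurable hJmeas.aestronglyMeasurable]
  rw [hint2, integral_eq_lintegral_of_nonneg_ae (Filter.Eventually.of_forall hJ0)
    hJmeas.aestronglyMeasurable]
  -- the BH-type threshold function
  set g : (Fin (m' + 1) → ℝ) → ℝ := fun v => (Rfun G (fp v) v : ℝ) * fp v / (G.card : ℝ)
    with hg
  have hnpos : (0:ℝ) < (G.card : ℝ) := by exact_mod_cast hn0
  have hganti : Antitone g := by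
    intro v v' hvv'
    have h := Rfun_mul_mono G hn0 hvv' (hfp0 v') (hfp_anti hvv')
    rw [hg]; dsimp only
    gcongr
  have hg0 : ∀ v, 0 ≤ g v := by
    intro v
    have := hfp0 v
    rw [hg]; dsimp only
    positivity
  have hgmeas : Measurable g := by
    have hR := measurable_Rfun_comp G fp hfpm
    exact ((measurable_from_top.comp hR).mul hfpm).div measurable_const
  have hcore : ∫⁻ v, ENNReal.ofReal (J v) ∂(Measure.pi π) ≤ 1 := by
    have hKpt : ∀ v, ENNReal.ofReal (J v) ≤
        ∑ j ∈ G, ENNReal.ofReal (if v j ≤ g v then ((G.card : ℝ) * g v)⁻¹ else 0) := by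
      intro v
      rw [← ENNReal.ofReal_sum_of_nonneg ?hnn]
      case hnn =>
        intro j hj
        have := hfp0 v
        split
        · apply inv_nonneg.mpr
          rw [hg]; dsimp only
          positivity
        · exact le_refl 0
      apply ENNReal.ofReal_le_ofReal
      have hpb := pointwise_bound G hG fp hfp0 v
      rw [hJ, hg]; dsimp only
      exact hpb
    have hKmeas : ∀ j : Fin (m' + 1), Measurable (fun v =>
        ENNReal.ofReal (if v j ≤ g v then ((G.card : ℝ) * g v)⁻¹ else 0)) := fun j =>
      ENNReal.measurable_ofReal.comp (Measurable.ite
        (measurableSet_le (measurable_pi_apply j) hgmeas)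
        ((measurable_const.mul hgmeas).inv) measurable_const)
    calc ∫⁻ v, ENNReal.ofReal (J v) ∂(Measure.pi π)
        ≤ ∫⁻ v, ∑ j ∈ G, ENNReal.ofReal (if v j ≤ g v then ((G.card:ℝ) * g v)⁻¹ else 0)
            ∂(Measure.pi π) := lintegral_mono hKpt
      _ = ∑ j ∈ G, ∫⁻ v, ENNReal.ofReal (if v j ≤ g v then ((G.card:ℝ) * g v)⁻¹ else 0)
            ∂(Measure.pi π) := lintegral_finset_sum _ (fun j _ => hKmeas j)
      _ ≤ ∑ j ∈ G, ENNReal.ofReal ((G.card:ℝ)⁻¹) := by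
          apply Finset.sum_le_sum
          intro j hj
          exact term_bound π j (hsu j hj) (hgt1 j) g hganti hg0 hgmeas _ hnpos
      _ = 1 := by
          rw [Finset.sum_const, nsmul_eq_mul]
          rw [show (G.card : ENNReal) = ENNReal.ofReal (G.card : ℝ) from
            (ENNReal.ofReal_natCast _).symm]
          rw [← ENNReal.ofReal_mul (by positivity)]
          rw [mul_inv_cancel₀ (ne_of_gt hnpos), ENNReal.ofReal_one]
  exact ENNReal.toReal_le_of_le_ofReal zero_le_one (by rwa [ENNReal.ofReal_one])
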